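/- Let V be an optimal computer and let T be a real with T > 1. Then the series Σ_{p ∈ Dom V} 2^{−|p|/T} diverges to ∞ (for any enumeration p₁, p₂, … of Dom V the partial sums Z_k(T) = Σ_{i=1}^k 2^{−|p_i|/T} tend to ∞), and the partial free energies F_k(T) = −T log₂ Z_k(T) tend to −∞. -/

import Mathlib

open Filter Topology

/-- A set of finite binary strings is prefix-free if no string in it is a
proper prefix of another string in it. -/
def PrefixFree (S : Set (List Bool)) : Prop :=
  ∀ p ∈ S, ∀ q ∈ S, p <+: q → p = q

/-- A computer: a partial recursive function from finite binary strings to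
finite binary strings whose domain is a nonempty prefix-free set. -/
structure Computer where
  f : List Bool →. List Bool
  partrec : Partrec f
  dom_nonempty : f.Dom.Nonempty
  dom_prefixFree : PrefixFree f.Dom

/-- A computer `U` is optimal if for each computer `C` there is `d ∈ ℕ` such
that every `p ∈ Dom C` admits `q` with `U(q) = C(p)` and `|q| ≤ |p| + d`. -/
def Optimal (U : Computer) : Prop :=
  ∀ C : Computer, ∃ d : ℕ, ∀ p ∈ C.f.Dom,
    ∃ q : List Bool, U.f q = C.f p ∧ q.length ≤ p.length + d

/-- `H_C(s)`: the length of a shortest program for `C` printing `s`. -/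
noncomputable def complexity (C : Computer) (s : List Bool) : ℕ :=
  sInf {n | ∃ p : List Bool, s ∈ C.f p ∧ p.length = n}

/-- The `i`-th bit (for `i = 0, 1, 2, …`) of the base-two expansion of
`α - ⌊α⌋` with infinitely many zeros. -/
noncomputable def bitOf (α : ℝ) (i : ℕ) : Bool :=
  decide (⌊(α - ⌊α⌋) * 2 ^ (i + 1)⌋ % 2 = 1)

/-- `α↾n`: the first `n` bits of the base-two expansion of `α - ⌊α⌋`
with infinitely many zeros. -/
noncomputable def firstBits (α : ℝ) (n : ℕ) : List Bool :=
  (List.range n).map (bitOf α)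

/-- A real `α` is computable if some total recursive `f : ℕ⁺ → ℚ` satisfies
`|α - f n| < 1/n` for all `n ≥ 1`. -/
def ComputableReal (α : ℝ) : Prop :=
  ∃ f : ℕ → ℚ, Computable f ∧ ∀ n : ℕ, 0 < n → |α - (f n : ℝ)| < 1 / n

/-- `α` is weakly Chaitin `T`-random (w.r.t. the computer `U`). -/
def WeaklyChaitinTRandom (U : Computer) (T α : ℝ) : Prop :=
  ∃ c : ℕ, ∀ n : ℕ, 0 < n → T * n - c ≤ (complexity U (firstBits α n) : ℝ)

/-- `α` is Chaitin `T`-random (w.r.t. the computer `U`). -/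
def ChaitinTRandom (U : Computer) (T α : ℝ) : Prop :=
  Tendsto (fun n : ℕ => (complexity U (firstBits α n) : ℝ) - T * n) atTop atTop

/-- `α` is `T`-compressible (w.r.t. the computer `U`): `H(α↾n) ≤ Tn + o(n)`. -/
def TCompressible (U : Computer) (T α : ℝ) : Prop :=
  ∃ g : ℕ → ℝ, Tendsto (fun n : ℕ => g n / n) atTop (nhds 0) ∧
    ∀ n : ℕ, 0 < n → (complexity U (firstBits α n) : ℝ) ≤ T * n + g n

/-- The Boltzmann factor `2^(-|p|/T)` of a program `p`. -/
noncomputable def boltzmann (T : ℝ) (p : List Bool) : ℝ :=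
  (2 : ℝ) ^ (-(p.length : ℝ) / T)

/-- Partition function `Z_C(T) = Σ_{p ∈ Dom C} 2^(-|p|/T)`. -/
noncomputable def Zfun (C : Computer) (T : ℝ) : ℝ :=
  ∑' p : C.f.Dom, boltzmann T p.1

/-- Free energy `F_C(T) = -T log₂ Z_C(T)`. -/
noncomputable def Ffun (C : Computer) (T : ℝ) : ℝ :=
  -T * Real.logb 2 (Zfun C T)

/-- Energy `E_C(T) = Z_C(T)⁻¹ Σ_{p ∈ Dom C} |p| 2^(-|p|/T)`. -/
noncomputable def Efun (C : Computer) (T : ℝ) : ℝ :=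
  (Zfun C T)⁻¹ * ∑' p : C.f.Dom, (p.1.length : ℝ) * boltzmann T p.1

/-- Statistical mechanical entropy `S_C(T) = (E_C(T) - F_C(T))/T`. -/
noncomputable def Sfun (C : Computer) (T : ℝ) : ℝ :=
  (Efun C T - Ffun C T) / T

/-- `𝒵(V)`: the set of `T ∈ (0,1)` with `Z_V(T)` computable. -/
def setZ (V : Computer) : Set ℝ := {T | T ∈ Set.Ioo 0 1 ∧ ComputableReal (Zfun V T)}

/-- `ℱ(V)`: the set of `T ∈ (0,1)` with `F_V(T)` computable. -/
def setF (V : Computer) : Set ℝ := {T | T ∈ Set.Ioo 0 1 ∧ ComputableReal (Ffun V T)}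

/-- `ℰ(V)`: the set of `T ∈ (0,1)` with `E_V(T)` computable. -/
def setE (V : Computer) : Set ℝ := {T | T ∈ Set.Ioo 0 1 ∧ ComputableReal (Efun V T)}

/-- `𝒮(V)`: the set of `T ∈ (0,1)` with `S_V(T)` computable. -/
def setS (V : Computer) : Set ℝ := {T | T ∈ Set.Ioo 0 1 ∧ ComputableReal (Sfun V T)}

/-- `FP_w` (w.r.t. the optimal computer `U` fixing `H`): the set of `T ∈ (0,1)`
that are weakly Chaitin `T`-random and `T`-compressible. -/
def FPw (U : Computer) : Set ℝ :=
  {T | T ∈ Set.Ioo 0 1 ∧ WeaklyChaitinTRandom U T T ∧ TCompressible U T T}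

/-- `FP` (w.r.t. the optimal computer `U` fixing `H`): the set of `T ∈ (0,1)`
that are Chaitin `T`-random and `T`-compressible. -/
def FP (U : Computer) : Set ℝ :=
  {T | T ∈ Set.Ioo 0 1 ∧ ChaitinTRandom U T T ∧ TCompressible U T T}

/-- A computer is physically reasonable if its domain contains two strings of
different lengths. -/
def PhysicallyReasonable (C : Computer) : Prop :=
  ∃ p ∈ C.f.Dom, ∃ q ∈ C.f.Dom, p.length ≠ q.length

/-- A computable measure machine: `Z_C(1)` is a computable real. -/
def ComputableMeasureMachine (C : Computer) : Prop :=
  ComputableReal (Zfun C 1)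

/-- `D` is the composition `C₀ ⊘ C₁ ⊘ ⋯ ⊘ C_{N-1}`: its domain consists of the
concatenations `p₀p₁⋯p_{N-1}` with each `pᵢ ∈ Dom Cᵢ`, and on such a
concatenation it returns `C₀(p₀)`. -/
def IsComposition {N : ℕ} (C : Fin N → Computer) (hN : 0 < N) (D : Computer) : Prop :=
  (∀ l, l ∈ D.f.Dom ↔
      ∃ ps : Fin N → List Bool, (∀ i, ps i ∈ (C i).f.Dom) ∧ l = (List.ofFn ps).flatten) ∧
  (∀ ps : Fin N → List Bool, (∀ i, ps i ∈ (C i).f.Dom) →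
      D.f ((List.ofFn ps).flatten) = (C ⟨0, hN⟩).f (ps ⟨0, hN⟩))

/-- A sequence of computers is recursive if a single partial recursive function
uniformly computes all of them. -/
def RecursiveSeq (V : ℕ → Computer) : Prop :=
  ∃ F : ℕ × List Bool →. List Bool, Partrec F ∧ ∀ n p, (V n).f p = F (n, p)

namespace PFDiv

/-- value of a bit list, head = LSB -/
def natOf (t : List Bool) : ℕ := t.foldr (fun b n => 2 * n + cond b 1 0) 0

def slice (x : List Bool × ℕ × ℕ) : List Bool :=
  (List.range x.2.2).map (fun i => x.1.getD (x.2.1 + i) false)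

def decode (l : List Bool) : Option (List Bool) :=
  if l.length = 2 * (l.idxOf false) + 1 + natOf (slice (l, l.idxOf false + 1, l.idxOf false))
  then some (slice (l, 2 * (l.idxOf false) + 1, l.length - (2 * (l.idxOf false) + 1)))
  else none

theorem natOf_primrec : Primrec natOf :=
  Primrec.list_foldr .id (.const 0) <| Primrec.to₂ <|
    Primrec.nat_add.comp
      (Primrec.nat_mul.comp (.const 2) (Primrec.snd.comp .snd))
      (Primrec.cond (Primrec.fst.comp .snd) (.const 1) (.const 0))

theorem slice_primrec : Primrec slice := by
  have h : Primrec fun x : List Bool × ℕ × ℕ => List.range x.2.2 :=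
    Primrec.list_range.comp (Primrec.snd.comp .snd)
  exact (Primrec.list_map h <| Primrec.to₂ <|
    (Primrec.list_getD false).comp (Primrec.fst.comp .fst)
      (Primrec.nat_add.comp ((Primrec.fst.comp Primrec.snd).comp .fst) .snd)).of_eq
    (fun x => rfl)

theorem decode_primrec : Primrec decode := by
  have hidx : Primrec fun l : List Bool => l.idxOf false :=
    Primrec.list_idxOf.comp (.const false) .id
  have hlen : Primrec (List.length : List Bool → ℕ) := Primrec.list_length
  have h1 : Primrec fun l : List Bool => 2 * (l.idxOf false) + 1 :=
    Primrec.nat_add.comp (Primrec.nat_mul.comp (.const 2) hidx) (.const 1)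
  have ht : Primrec fun l : List Bool => slice (l, l.idxOf false + 1, l.idxOf false) :=
    slice_primrec.comp (Primrec.pair .id (Primrec.pair
      (Primrec.nat_add.comp hidx (.const 1)) hidx))
  have hs : Primrec fun l : List Bool =>
      slice (l, 2 * (l.idxOf false) + 1, l.length - (2 * (l.idxOf false) + 1)) :=
    slice_primrec.comp (Primrec.pair .id (Primrec.pair h1
      (Primrec.nat_sub.comp hlen h1)))
  exact Primrec.ite (Primrec.eq.comp hlen (Primrec.nat_add.comp h1 (natOf_primrec.comp ht)))
    (Primrec.option_some.comp hs) (.const none)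


theorem slice_eq {l : List Bool} {a n : ℕ} (h : a + n ≤ l.length) :
    slice (l, a, n) = (l.drop a).take n := by
  apply List.ext_getElem
  · simp [slice]; omega
  · intro i h1 h2
    simp only [slice, List.getElem_map, List.getElem_range, List.getElem_take,
      List.getElem_drop]
    have : a + i < l.length := by simp [slice] at h1; omega
    rw [List.getD_eq_getElem _ _ this]

theorem slice_prefix {l l' : List Bool} {a n : ℕ} (h : l <+: l') (hn : a + n ≤ l.length) :
    slice (l', a, n) = slice (l, a, n) := by
  obtain ⟨r, rfl⟩ := h
  unfold slice
  simp only
  apply List.map_congr_left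
  intro i hi
  simp only [List.mem_range] at hi
  rw [List.getD_append]
  omega

theorem indexOf_enc (n : ℕ) (r : List Bool) :
    (List.replicate n true ++ false :: r).idxOf false = n := by
  induction n with
  | zero => simp [List.idxOf_cons_self]
  | succ k ih =>
    rw [List.replicate_succ, List.cons_append, List.idxOf_cons_ne _ (by simp), ih]

theorem natOf_cons (b : Bool) (t : List Bool) : natOf (b :: t) = 2 * natOf t + cond b 1 0 := rfl

theorem natOf_pow (j : ℕ) : natOf (List.replicate j false ++ [true]) = 2 ^ j := by
  induction j with
  | zero => decide
  | succ k ih => rw [List.replicate_succ, List.cons_append, natOf_cons, ih]; simp [pow_succ]; ring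

def enc (t s : List Bool) : List Bool := List.replicate t.length true ++ false :: (t ++ s)

theorem decode_enc (t s : List Bool) (h : natOf t = s.length) : decode (enc t s) = some s := by
  have hlen : (enc t s).length = 2 * t.length + 1 + s.length := by simp [enc]; ring
  have hidx : (enc t s).idxOf false = t.length := indexOf_enc _ _
  have hdrop : (enc t s).drop (t.length + 1) = t ++ s := by
    have : enc t s = (List.replicate t.length true ++ [false]) ++ (t ++ s) := by simp [enc]
    rw [this, List.drop_append_of_le_length (by simp)]
    simp
  have ht : slice (enc t s, t.length + 1, t.length) = t := by
    rw [slice_eq (by omega), hdrop, List.take_left]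
  have hs : slice (enc t s, 2 * t.length + 1, (enc t s).length - (2 * t.length + 1)) = s := by
    rw [slice_eq (by omega), hlen]
    have : (enc t s).drop (2 * t.length + 1) = s := by
      have h2 : 2 * t.length + 1 = (t.length + 1) + t.length := by ring
      rw [h2, ← List.drop_drop, hdrop, List.drop_left' rfl]
    rw [this]; simp
  unfold decode
  rw [hlen] at hs
  rw [hidx, ht, hlen, h, if_pos rfl, hs]

theorem decode_prefixFree {l l' s s' : List Bool} (h : decode l = some s)
    (h' : decode l' = some s') (hp : l <+: l') : l = l' := by
  unfold decode at h h'
  split_ifs at h h' with hc hc'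
  set j := l.idxOf false with hj
  have hjlt : j < l.length := by
    rcases lt_or_eq_of_le (List.idxOf_le_length (a := false) (l := l)) with h1 | h1
    · exact h1
    · omega
  have hmem : false ∈ l := List.idxOf_lt_length_iff.mp hjlt
  have hidx' : l'.idxOf false = j := by
    obtain ⟨r, rfl⟩ := hp
    rw [List.idxOf_append_of_mem hmem]
  have hslice : slice (l', j + 1, j) = slice (l, j + 1, j) :=
    slice_prefix hp (by omega)
  rw [hidx', hslice] at hc'
  exact hp.eq_of_length (by omega)


def Cmach (_dummy : Unit) : Computer where
  f := fun l => (decode l : Part (List Bool))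
  partrec := Computable.ofOption decode_primrec.to_comp
  dom_nonempty := by
    refine ⟨[false], ?_⟩
    have h : decode [false] = some [] := by decide +kernel
    exact Part.dom_iff_mem.mpr ⟨[], Part.mem_ofOption.mpr (by rw [h]; rfl)⟩
  dom_prefixFree := by
    intro l hl l' hl' hp
    obtain ⟨s, hs⟩ := Part.dom_iff_mem.mp hl
    obtain ⟨s', hs'⟩ := Part.dom_iff_mem.mp hl'
    exact decode_prefixFree (Part.mem_ofOption.mp hs) (Part.mem_ofOption.mp hs') hp

theorem Cmach_apply (t s : List Bool) (h : natOf t = s.length) :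
    (Cmach ()).f (enc t s) = Part.some s := by
  show ((decode (enc t s) : Option (List Bool)) : Part (List Bool)) = Part.some s
  rw [decode_enc t s h]
  rfl

theorem enc_length (t s : List Bool) : (enc t s).length = 2 * t.length + 1 + s.length := by
  simp [enc]; ring

theorem enc_mem_dom (t s : List Bool) (h : natOf t = s.length) :
    enc t s ∈ (Cmach ()).f.Dom :=
  Part.dom_iff_mem.mpr ⟨s, by rw [Cmach_apply t s h]; exact Part.mem_some s⟩

end PFDiv

/-- For optimal `V` and `T > 1`, for any enumeration of `Dom V`
the partial sums `Z_k(T)` tend to `∞`, and `F_k(T) = -T log₂ Z_k(T)` tend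
to `-∞`. -/
theorem partitionFunction_diverges (V : Computer) (hV : Optimal V)
    (T : ℝ) (hT : 1 < T) (p : ℕ → List Bool)
    (hinj : Function.Injective p) (hran : Set.range p = V.f.Dom) :
    Tendsto (fun k : ℕ => ∑ i ∈ Finset.range k, boltzmann T (p i)) atTop atTop ∧
    Tendsto (fun k : ℕ =>
        -T * Real.logb 2 (∑ i ∈ Finset.range k, boltzmann T (p i))) atTop atBot := by
  classical
  obtain ⟨d, hd⟩ := hV (PFDiv.Cmach ())
  have hT0 : (0:ℝ) < T := by linarith
  set L : ℕ → ℕ := fun j => 2 ^ j + 2 * j + 3 + d with hL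
  set E : ℕ → ℝ := fun j => (2:ℝ) ^ j - (L j : ℝ) / T with hE
  -- E tends to atTop
  have hEtop : Tendsto E atTop atTop := by
    have h1 : Tendsto (fun j : ℕ => (2:ℝ) ^ j) atTop atTop :=
      tendsto_pow_atTop_atTop_of_one_lt one_lt_two
    have h2 : Tendsto (fun j : ℕ => (j:ℝ) / 2 ^ j) atTop (nhds 0) := by
      simpa using tendsto_pow_const_div_const_pow_of_one_lt 1 (one_lt_two (α := ℝ))
    have h3 : Tendsto (fun j : ℕ => (1:ℝ) / 2 ^ j) atTop (nhds 0) := by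
      simpa using tendsto_pow_const_div_const_pow_of_one_lt 0 (one_lt_two (α := ℝ))
    have hg : Tendsto
        (fun j : ℕ => (1 - 1 / T) - (1/T) * (2 * ((j:ℝ) / 2 ^ j) + ((2*d+6:ℝ)/2) * ((1:ℝ) / 2 ^ j)))
        atTop (nhds (1 - 1 / T)) := by
      have : Tendsto
          (fun j : ℕ => (1/T) * (2 * ((j:ℝ) / 2 ^ j) + ((2*d+6:ℝ)/2) * ((1:ℝ) / 2 ^ j)))
          atTop (nhds 0) := by
        have := ((h2.const_mul 2).add (h3.const_mul ((2*d+6:ℝ)/2))).const_mul (1/T)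
        simpa using this
      simpa using (tendsto_const_nhds (x := (1 - 1/T))).sub this
    have hpos : (0:ℝ) < 1 - 1 / T := by
      rw [sub_pos, div_lt_one hT0]; exact hT
    have := Filter.Tendsto.atTop_mul_pos hpos h1 hg
    refine this.congr (fun j => ?_)
    have h2j : (0:ℝ) < (2:ℝ) ^ j := by positivity
    simp only [hE, hL]
    field_simp [hE, hL]
    push_cast
    ring
  -- the sums
  have hpos : ∀ q : List Bool, 0 < boltzmann T q := fun q =>
    Real.rpow_pos_of_pos two_pos _
  have hmono : Monotone (fun k : ℕ => ∑ i ∈ Finset.range k, boltzmann T (p i)) := by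
    intro a b hab
    exact Finset.sum_le_sum_of_subset_of_nonneg (Finset.range_subset_range.2 hab)
      (fun i _ _ => (hpos _).le)
  have hmain : Tendsto (fun k : ℕ => ∑ i ∈ Finset.range k, boltzmann T (p i)) atTop atTop := by
    refine tendsto_atTop_atTop_of_monotone hmono ?_
    intro M
    -- find j with 2 ^ E j ≥ M
    have h2E : Tendsto (fun j : ℕ => (2:ℝ) ^ (E j)) atTop atTop := by
      have : Tendsto (fun j : ℕ => Real.exp (Real.log 2 * E j)) atTop atTop :=
        Real.tendsto_exp_atTop.comp (hEtop.const_mul_atTop (Real.log_pos one_lt_two))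
      refine this.congr (fun j => ?_)
      rw [Real.rpow_def_of_pos two_pos]
    obtain ⟨j, hj⟩ := (h2E.eventually_ge_atTop M).exists
    -- for each boolean word of length 2^j, find a program
    set t : List Bool := List.replicate j false ++ [true] with ht
    have hkey : ∀ v : Fin (2 ^ j) → Bool, ∃ i : ℕ,
        List.ofFn v ∈ V.f (p i) ∧ (p i).length ≤ L j := by
      intro v
      have hnat : PFDiv.natOf t = (List.ofFn v).length := by
        rw [PFDiv.natOf_pow, List.length_ofFn]
      obtain ⟨q, hq1, hq2⟩ := hd (PFDiv.enc t (List.ofFn v)) (PFDiv.enc_mem_dom _ _ hnat)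
      rw [PFDiv.Cmach_apply _ _ hnat] at hq1
      have hqmem : List.ofFn v ∈ V.f q := by rw [hq1]; exact Part.mem_some _
      have hqdom : q ∈ V.f.Dom := Part.dom_iff_mem.mpr ⟨_, hqmem⟩
      rw [← hran] at hqdom
      obtain ⟨i, rfl⟩ := hqdom
      refine ⟨i, hqmem, ?_⟩
      have hlen : (PFDiv.enc t (List.ofFn v)).length = 2 ^ j + 2 * j + 3 := by
        rw [PFDiv.enc_length, List.length_ofFn]
        simp [ht]
        ring
      rw [hlen] at hq2
      simp only [hL]
      omega
    choose ι h1 h2 using hkey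
    have hιinj : Function.Injective ι := by
      intro v w hvw
      have := Part.mem_unique (hvw ▸ h1 v) (h1 w)
      exact funext fun i => by
        have := List.ofFn_inj.mp this
        exact congrFun this i
    set F : Finset ℕ := Finset.image ι Finset.univ with hF
    refine ⟨F.sup id + 1, ?_⟩
    have hsub : F ⊆ Finset.range (F.sup id + 1) := by
      intro i hi
      exact Finset.mem_range.mpr (Nat.lt_succ_of_le (Finset.le_sup (f := id) hi))
    have step1 : ∑ i ∈ F, boltzmann T (p i) ≤
        ∑ i ∈ Finset.range (F.sup id + 1), boltzmann T (p i) :=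
      Finset.sum_le_sum_of_subset_of_nonneg hsub (fun i _ _ => (hpos _).le)
    have step2 : ∑ i ∈ F, boltzmann T (p i) =
        ∑ v : Fin (2 ^ j) → Bool, boltzmann T (p (ι v)) := by
      rw [hF, Finset.sum_image (fun v _ w _ h => hιinj h)]
    have step3 : ∀ v : Fin (2 ^ j) → Bool,
        (2:ℝ) ^ (-(L j : ℝ) / T) ≤ boltzmann T (p (ι v)) := by
      intro v
      unfold boltzmann
      apply Real.rpow_le_rpow_of_exponent_le one_le_two
      have := h2 v
      have hc : ((p (ι v)).length : ℝ) ≤ (L j : ℝ) := by exact_mod_cast this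
      rw [div_le_div_iff_of_pos_right hT0]
      linarith
    have step4 : (2:ℝ) ^ (E j) ≤ ∑ v : Fin (2 ^ j) → Bool, boltzmann T (p (ι v)) := by
      calc (2:ℝ) ^ (E j) = (2:ℝ) ^ ((2:ℝ) ^ (j:ℕ)) * (2:ℝ) ^ (-(L j : ℝ) / T) := by
            rw [← Real.rpow_add two_pos]
            congr 1
            simp [hE]
            ring
        _ = (Fintype.card (Fin (2 ^ j) → Bool) : ℝ) * (2:ℝ) ^ (-(L j : ℝ) / T) := by
            congr 1
            rw [Fintype.card_fun, Fintype.card_fin, Fintype.card_bool]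
            push_cast
            rw [← Real.rpow_natCast 2 (2^j)]
            congr 1
            push_cast
            ring
        _ ≤ ∑ v : Fin (2 ^ j) → Bool, boltzmann T (p (ι v)) := by
            rw [← Finset.card_univ, ← nsmul_eq_mul]
            exact Finset.card_nsmul_le_sum _ _ _ (fun v _ => step3 v)
    linarith [hj, step1, step2 ▸ step4]
  refine ⟨hmain, ?_⟩
  have hlog : Tendsto (fun k : ℕ =>
      Real.logb 2 (∑ i ∈ Finset.range k, boltzmann T (p i))) atTop atTop :=
    (Real.tendsto_logb_atTop one_lt_two).comp hmain
  have hneg : (-T : ℝ) < 0 := by linarith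
  exact (tendsto_const_mul_atBot_of_neg hneg).mpr hlog
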